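/- If the entries of an incomplete pairwise comparison matrix are specified exactly on the edges of a tree on the n vertices (together with reciprocals), then there is a completion to a consistent PCM, and this completion is unique. -/

import Mathlib

open SimpleGraph

private noncomputable def wprod {n : ℕ} {G : SimpleGraph (Fin n)} (a : Fin n → Fin n → ℝ) :
    ∀ {u v : Fin n}, G.Walk u v → ℝ
  | _, _, SimpleGraph.Walk.nil => 1
  | _, _, @SimpleGraph.Walk.cons _ _ u x _ h p => a u x * wprod a p

private lemma wprod_pos {n : ℕ} {G : SimpleGraph (Fin n)} {a : Fin n → Fin n → ℝ}
    (hpos : ∀ i j, G.Adj i j → 0 < a i j) :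
    ∀ {u v : Fin n} (p : G.Walk u v), 0 < wprod a p := by
  intro u v p
  induction p with
  | nil => simp [wprod]
  | cons h p ih => exact mul_pos (hpos _ _ h) ih

private lemma wprod_append {n : ℕ} {G : SimpleGraph (Fin n)} (a : Fin n → Fin n → ℝ) :
    ∀ {u v w : Fin n} (p : G.Walk u v) (q : G.Walk v w),
      wprod a (p.append q) = wprod a p * wprod a q
  | _, _, _, SimpleGraph.Walk.nil, q => by simp [wprod]
  | _, _, _, SimpleGraph.Walk.cons h p, q => by
      simp only [SimpleGraph.Walk.cons_append, wprod, wprod_append a p q, mul_assoc]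

private lemma wprod_concat {n : ℕ} {G : SimpleGraph (Fin n)} (a : Fin n → Fin n → ℝ)
    {u v w : Fin n} (p : G.Walk u v) (h : G.Adj v w) :
    wprod a (p.concat h) = wprod a p * a v w := by
  rw [SimpleGraph.Walk.concat_eq_append, wprod_append]
  simp [wprod]

private lemma isPath_concat {n : ℕ} {G : SimpleGraph (Fin n)} {u v x : Fin n}
    {p : G.Walk u v} (hp : p.IsPath) (h : G.Adj v x) (hx : x ∉ p.support) :
    (p.concat h).IsPath := by
  rw [← SimpleGraph.Walk.isPath_reverse_iff, SimpleGraph.Walk.reverse_concat]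
  rw [SimpleGraph.Walk.cons_isPath_iff]
  refine ⟨hp.reverse, ?_⟩
  simpa using hx

private lemma walk_eval {n : ℕ} {G : SimpleGraph (Fin n)} {a : Fin n → Fin n → ℝ}
    {B : Matrix (Fin n) (Fin n) ℝ}
    (hBpos : ∀ i j, 0 < B i j)
    (hBcons : ∀ i j k, B i k = B i j * B j k)
    (hBedge : ∀ i j, G.Adj i j → B i j = a i j) :
    ∀ {u v : Fin n} (p : G.Walk u v), B u v = wprod a p := by
  intro u v p
  induction p with
  | @nil z =>
    have h := hBcons z z z
    have hpos := hBpos z z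
    have : B z z = 1 := by nlinarith
    simpa [wprod] using this
  | @cons u x v h p ih =>
    calc B u v = B u x * B x v := hBcons u x v
    _ = a u x * wprod a p := by rw [hBedge _ _ h, ih]
    _ = wprod a (SimpleGraph.Walk.cons h p) := by simp [wprod]

theorem tree_incomplete_pcm_unique_consistent_completion
    (n : ℕ) (G : SimpleGraph (Fin n)) (hT : G.IsTree)
    (a : Fin n → Fin n → ℝ)
    (hpos : ∀ i j, G.Adj i j → 0 < a i j)
    (hrec : ∀ i j, G.Adj i j → a j i = 1 / a i j) :
    ∃! B : Matrix (Fin n) (Fin n) ℝ,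
      (∀ i j, 0 < B i j) ∧ (∀ i j, B j i = 1 / B i j) ∧
      (∀ i j k, B i k = B i j * B j k) ∧
      (∀ i j, G.Adj i j → B i j = a i j) := by
  classical
  obtain ⟨hne, huniq⟩ := (SimpleGraph.isTree_iff_existsUnique_path).mp hT
  obtain ⟨r⟩ := hne
  -- choose the unique path from r to each vertex
  have hchoice : ∀ i : Fin n, ∃ p : G.Walk r i, p.IsPath := fun i => (huniq r i).exists
  set P : ∀ i : Fin n, G.Walk r i := fun i => (hchoice i).choose with hP
  have hPpath : ∀ i, (P i).IsPath := fun i => (hchoice i).choose_spec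
  set w : Fin n → ℝ := fun i => wprod a (P i) with hw
  have hwpos : ∀ i, 0 < w i := fun i => wprod_pos hpos (P i)
  -- key edge relation : w j = w i * a i j
  have hedge_half : ∀ i j, G.Adj i j → j ∉ (P i).support → w j = w i * a i j := by
    intro i j hij hjs
    have hconcat : ((P i).concat hij).IsPath := isPath_concat (hPpath i) hij hjs
    have : (P i).concat hij = P j := (huniq r j).unique hconcat (hPpath j)
    rw [hw]
    simp only
    rw [← this, wprod_concat]
  have hedge : ∀ i j, G.Adj i j → w j = w i * a i j := by
    intro i j hij
    by_cases hjs : j ∈ (P i).support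
    · -- then i ∉ (P j).support
      have his : i ∉ (P j).support := by
        intro his
        -- takeUntil of P j at i is a path from r to i, so equals P i
        have htk : ((P j).takeUntil i his).IsPath := (hPpath j).takeUntil his
        have heq : (P j).takeUntil i his = P i := (huniq r i).unique htk (hPpath i)
        have hnd : (P j).support.Nodup := (hPpath j).support_nodup
        have hspec := SimpleGraph.Walk.take_spec (P j) his
        have hsupp := SimpleGraph.Walk.support_append ((P j).takeUntil i his)
          ((P j).dropUntil i his)
        rw [hspec] at hsupp
        rw [hsupp] at hnd
        have hne' : i ≠ j := hij.ne
        -- j is in both lists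
        have hj1 : j ∈ ((P j).takeUntil i his).support := heq ▸ hjs
        have hj2 : j ∈ ((P j).dropUntil i his).support.tail := by
          have hjm : j ∈ ((P j).dropUntil i his).support :=
            SimpleGraph.Walk.end_mem_support _
          rcases (SimpleGraph.Walk.mem_support_iff _).mp hjm with h | h
          · exact absurd h.symm hne'
          · exact h
        exact (List.disjoint_of_nodup_append hnd) hj1 hj2
      have := hedge_half j i hij.symm his
      have haij : a i j ≠ 0 := ne_of_gt (hpos i j hij)
      rw [hrec i j hij] at this
      field_simp at this
      rw [this]
    · exact hedge_half i j hij hjs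
  set B : Matrix (Fin n) (Fin n) ℝ := fun i j => w j / w i with hB
  have hBprop : (∀ i j, 0 < B i j) ∧ (∀ i j, B j i = 1 / B i j) ∧
      (∀ i j k, B i k = B i j * B j k) ∧
      (∀ i j, G.Adj i j → B i j = a i j) := by
    refine ⟨fun i j => div_pos (hwpos j) (hwpos i), fun i j => ?_, fun i j k => ?_, ?_⟩
    · simp only [hB]
      rw [one_div_div]
    · simp only [hB]
      field_simp
      rw [mul_comm (w i) (w j), mul_comm (w k) (w j), mul_div_mul_left _ _ (ne_of_gt (hwpos j))]
    · intro i j hij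
      simp only [hB]
      rw [hedge i j hij, mul_comm, mul_div_assoc, div_self (ne_of_gt (hwpos i)), mul_one]
  refine ⟨B, hBprop, ?_⟩
  rintro C ⟨hCpos, _, hCcons, hCedge⟩
  funext u v
  obtain ⟨p⟩ := hT.isConnected u v
  rw [walk_eval hCpos hCcons hCedge p,
    ← walk_eval hBprop.1 hBprop.2.2.1 hBprop.2.2.2 p]
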